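/- The determinant of the matrix A_n factors completely into linear factors: det A_n = ∏_{k=2}^{n} ∏_{i=1}^{k-1} (1 - q_i t_{k-i})^{binom(n-1,k-1)}. -/

import Mathlib

/-! Compositions of `n` are encoded by their descent sets, i.e. by boolean
words `u : Fin (n-1) → Bool`, where `u j = true` iff `j+1` is a descent. -/

/-- The (increasingly sorted) list of descents of the composition of `n = m+1`
encoded by the boolean word `v : Fin m → Bool`. -/
def desList {m : ℕ} (v : Fin m → Bool) : List ℕ :=
  ((List.finRange m).filter (fun j => v j)).map (fun j => (j : ℕ) + 1)

/-- `𝒜(I,J) = {k < ℓ(J) : j_1 + ⋯ + j_k ∉ Des(I)}` for the compositions `I, J`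
encoded by the words `u, v`. -/
def AAset {m : ℕ} (u v : Fin m → Bool) : Finset ℕ :=
  (Finset.Icc 1 (desList v).length).filter
    (fun k => (desList v).getD (k-1) 0 ∉ desList u)

/-- The mirror image `Ī` (reversed word). -/
def mirW {m : ℕ} (u : Fin m → Bool) : Fin m → Bool := fun j => u j.rev

/-- The conjugate of the mirror image `Ī∼` (complemented word). -/
def cmplW {m : ℕ} (u : Fin m → Bool) : Fin m → Bool := fun j => ! u j

/-- The entry `A_n(I,J) = (∏_{k ∈ 𝒜(Ī,J̄)} t_k) · (∏_{l ∈ 𝒜(Ī∼,J̄∼)} q_l)`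
of the `2^(n-1) × 2^(n-1)` matrix `A_n` (here `n = m+1`). -/
def matA {R : Type*} [CommRing R] (q t : ℕ → R) {m : ℕ} (u v : Fin m → Bool) : R :=
  (∏ k ∈ AAset (mirW u) (mirW v), t k) * (∏ l ∈ AAset (cmplW u) (cmplW v), q l)


def desL {m : ℕ} (v : Fin m → Bool) : List ℕ :=
  ((List.finRange m).filter (fun j => v j)).map (fun j : Fin m => (j : ℕ) + 1)

lemma desList_eq {m : ℕ} (v : Fin m → Bool) : desList v = desL v := by
  unfold desList desL
  generalize (List.finRange m).filter (fun j => v j) = l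
  induction l with
  | nil => rfl
  | cons a l ih => simp_all

lemma desL_cons {m : ℕ} (y : Bool) (V : Fin m → Bool) :
    desL (Fin.cons y V) = (if y then [1] else []) ++ (desL V).map (· + 1) := by
  unfold desL
  rw [List.finRange_succ, List.filter_cons]
  simp only [Fin.cons_zero, Fin.cons_succ, List.filter_map, Function.comp_def, List.map_map]
  cases y
  · rw [if_neg (by simp), if_neg (by simp), List.nil_append, List.map_map]
    exact List.map_congr_left (fun a _ => by simp)
  · rw [if_pos rfl, if_pos rfl, List.map_cons, List.singleton_append, List.map_map]
    simp only [List.cons.injEq, Fin.val_zero, zero_add, true_and]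
    exact List.map_congr_left (fun a _ => by simp)

lemma desL_snoc {m : ℕ} (b : Bool) (V : Fin m → Bool) :
    desL (Fin.snoc V b) = desL V ++ (if b then [m+1] else []) := by
  unfold desL
  rw [List.finRange_succ_last, List.filter_append, List.filter_map]
  simp only [Function.comp_def, Fin.snoc_castSucc, Fin.snoc_last, List.filter_cons,
    List.filter_nil, List.map_append, List.map_map]
  have h : List.map (fun x : Fin m => ((x.castSucc : Fin (m+1)) : ℕ) + 1)
      ((List.finRange m).filter fun x => V x) =
      List.map (fun j : Fin m => (j:ℕ)+1) ((List.finRange m).filter fun x => V x) :=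
    List.map_congr_left (fun a _ => by simp)
  cases b
  · rw [if_neg (by simp)]
    rw [if_neg (by simp), List.append_nil, List.map_nil, List.append_nil]
    exact h
  · rw [if_pos rfl, if_pos rfl, h]
    simp

lemma mem_desL_le {m : ℕ} {v : Fin m → Bool} {d : ℕ} (h : d ∈ desL v) : 1 ≤ d ∧ d ≤ m := by
  unfold desL at h
  obtain ⟨j, hj, rfl⟩ := List.mem_map.1 h
  exact ⟨Nat.le_add_left _ _, j.isLt⟩

lemma mirW_cons {m : ℕ} (a : Bool) (u : Fin m → Bool) :
    mirW (Fin.cons a u) = Fin.snoc (mirW u) a := by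
  funext j
  induction j using Fin.lastCases with
  | last => simp [mirW, Fin.rev_last]
  | cast i => simp [mirW, Fin.rev_castSucc]

lemma cmplW_cons {m : ℕ} (a : Bool) (u : Fin m → Bool) :
    cmplW (Fin.cons a u) = Fin.cons (!a) (cmplW u) := by
  funext j
  induction j using Fin.cases with
  | zero => simp [cmplW]
  | succ i => simp [cmplW]

lemma AAset_eq {m : ℕ} (u v : Fin m → Bool) :
    AAset u v = (Finset.Icc 1 (desL v).length).filter
      (fun k => (desL v).getD (k-1) 0 ∉ desL u) := by
  unfold AAset
  simp only [desList_eq]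

lemma getD_mem {l : List ℕ} {i : ℕ} (h : i < l.length) : l.getD i 0 ∈ l := by
  rw [List.getD_eq_getElem l 0 h]
  exact List.getElem_mem h

lemma AAset_subset {m : ℕ} (u v : Fin m → Bool) :
    AAset u v ⊆ Finset.Icc 1 (desL v).length := by
  rw [AAset_eq]; exact Finset.filter_subset _ _

lemma AAset_snoc_false {m : ℕ} (a : Bool) (U V : Fin m → Bool) :
    AAset (Fin.snoc U a) (Fin.snoc V false) = AAset U V := by
  have hv : desL (Fin.snoc V false) = desL V := by
    rw [desL_snoc, if_neg (by simp), List.append_nil]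
  rw [AAset_eq, AAset_eq, hv]
  apply Finset.filter_congr
  intro k hk
  rw [Finset.mem_Icc] at hk
  have hmem : (desL V).getD (k-1) 0 ∈ desL V := getD_mem (by omega)
  have hle := mem_desL_le hmem
  rw [desL_snoc]
  cases a
  · rw [if_neg (by simp), List.append_nil]
  · rw [if_pos rfl]
    simp only [List.mem_append, List.mem_singleton, not_or]
    constructor
    · intro h; exact h.1
    · intro h; exact ⟨h, by omega⟩

lemma AAset_snoc_true {m : ℕ} (a : Bool) (U V : Fin m → Bool) :
    AAset (Fin.snoc U a) (Fin.snoc V true) =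
      if a then AAset U V else insert ((desL V).length + 1) (AAset U V) := by
  have hL : (desL (Fin.snoc V true)).length = (desL V).length + 1 := by
    rw [desL_snoc, if_pos rfl, List.length_append, List.length_singleton]
  ext k
  rw [AAset_eq, Finset.mem_filter, Finset.mem_Icc, hL]
  have hdes : desL (Fin.snoc V true) = desL V ++ [m+1] := by rw [desL_snoc, if_pos rfl]
  have hdesu : desL (Fin.snoc U a) = desL U ++ (if a then [m+1] else []) := desL_snoc a U
  by_cases hk1 : 1 ≤ k
  · by_cases hk : k ≤ (desL V).length
    · -- k in old range
      have hmem : (desL V).getD (k-1) 0 ∈ desL V := getD_mem (by omega)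
      have hle := mem_desL_le hmem
      have hget : (desL (Fin.snoc V true)).getD (k-1) 0 = (desL V).getD (k-1) 0 := by
        rw [hdes, List.getD_append _ _ _ _ (by omega)]
      rw [hget]
      have hiff : ((desL V).getD (k-1) 0 ∉ desL (Fin.snoc U a)) ↔
          ((desL V).getD (k-1) 0 ∉ desL U) := by
        rw [hdesu]
        cases a
        · rw [if_neg (by simp), List.append_nil]
        · rw [if_pos rfl]
          simp only [List.mem_append, List.mem_singleton, not_or]
          constructor
          · intro h; exact h.1
          · intro h; exact ⟨h, by omega⟩
      have hold : k ∈ AAset U V ↔ (1 ≤ k ∧ k ≤ (desL V).length) ∧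
          (desL V).getD (k-1) 0 ∉ desL U := by
        rw [AAset_eq, Finset.mem_filter, Finset.mem_Icc]
      have hne : k ≠ (desL V).length + 1 := by omega
      cases a
      · simp only [if_neg (by simp : ¬ (false = true))]
        rw [Finset.mem_insert, hold]
        constructor
        · intro h; exact Or.inr ⟨⟨hk1, hk⟩, (hiff.1 h.2)⟩
        · rintro (h | h)
          · exact absurd h hne
          · exact ⟨⟨hk1, by omega⟩, hiff.2 h.2⟩
      · rw [if_pos rfl, hold]
        constructor
        · intro h; exact ⟨⟨hk1, hk⟩, hiff.1 h.2⟩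
        · intro h; exact ⟨⟨hk1, by omega⟩, hiff.2 h.2⟩
    · by_cases hk2 : k = (desL V).length + 1
      · -- new index
        subst hk2
        have hget : (desL (Fin.snoc V true)).getD ((desL V).length + 1 - 1) 0 = m + 1 := by
          rw [hdes, Nat.add_sub_cancel, List.getD_append_right _ _ _ _ (le_refl _),
            Nat.sub_self]
          rfl
        rw [hget]
        have hnotinAA : ((desL V).length + 1) ∉ AAset U V := fun h => by
          have := Finset.mem_Icc.1 (AAset_subset U V h); omega
        cases a
        · simp only [if_neg (by simp : ¬ (false = true))]
          rw [Finset.mem_insert]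
          have : m + 1 ∉ desL (Fin.snoc U false) := by
            rw [hdesu, if_neg (by simp), List.append_nil]
            intro h; have := mem_desL_le h; omega
          simp [this]
        · rw [if_pos rfl]
          have : m + 1 ∈ desL (Fin.snoc U true) := by
            rw [hdesu, if_pos rfl]; simp
          simp only [this, not_true_eq_false, and_false, false_iff]
          exact hnotinAA
      · -- out of range
        have h1 : ¬ (1 ≤ k ∧ k ≤ (desL V).length + 1) := by omega
        have h2 : k ∉ AAset U V := fun h => by
          have := Finset.mem_Icc.1 (AAset_subset U V h); omega
        cases a
        · simp only [if_neg (by simp : ¬ (false = true))]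
          rw [Finset.mem_insert]
          simp only [h1, false_and, false_iff, not_or]
          exact ⟨by omega, h2⟩
        · rw [if_pos rfl]
          simp only [h1, false_and, false_iff]
          exact h2
  · have h2 : k ∉ AAset U V := fun h => by
      have := Finset.mem_Icc.1 (AAset_subset U V h); omega
    have h1 : ¬ (1 ≤ k ∧ k ≤ (desL V).length + 1) := by omega
    cases a
    · simp only [if_neg (by simp : ¬ (false = true))]
      rw [Finset.mem_insert]
      simp only [h1, false_and, false_iff, not_or]
      exact ⟨by omega, h2⟩
    · rw [if_pos rfl]
      simp only [h1, false_and, false_iff]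
      exact h2

lemma AAset_cons_false {m : ℕ} (x : Bool) (U V : Fin m → Bool) :
    AAset (Fin.cons x U) (Fin.cons false V) = AAset U V := by
  have hv : desL (Fin.cons false V) = (desL V).map (· + 1) := by
    rw [desL_cons, if_neg (by simp), List.nil_append]
  have hlen : ((desL V).map (· + 1)).length = (desL V).length := List.length_map _
  rw [AAset_eq, AAset_eq, hv, hlen]
  apply Finset.filter_congr
  intro k hk
  rw [Finset.mem_Icc] at hk
  have hklt : k - 1 < (desL V).length := by omega
  have hget : ((desL V).map (· + 1)).getD (k-1) 0 = (desL V).getD (k-1) 0 + 1 := by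
    rw [List.getD_eq_getElem _ 0 (by rwa [hlen]), List.getD_eq_getElem _ 0 hklt,
      List.getElem_map]
  have hmem : (desL V).getD (k-1) 0 ∈ desL V := getD_mem hklt
  have hle := mem_desL_le hmem
  rw [hget, desL_cons]
  cases x
  · rw [if_neg (by simp), List.nil_append]
    simp only [List.mem_map]
    constructor
    · intro h hc; exact h ⟨_, hc, rfl⟩
    · rintro h ⟨d, hd, hd2⟩
      have : d = (desL V).getD (k-1) 0 := by omega
      exact h (this ▸ hd)
  · rw [if_pos rfl]
    simp only [List.singleton_append, List.mem_cons, List.mem_map, not_or]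
    constructor
    · intro h hc; exact h.2 ⟨_, hc, rfl⟩
    · intro h
      refine ⟨by omega, ?_⟩
      rintro ⟨d, hd, hd2⟩
      have : d = (desL V).getD (k-1) 0 := by omega
      exact h (this ▸ hd)

lemma AAset_cons_true {m : ℕ} (x : Bool) (U V : Fin m → Bool) :
    AAset (Fin.cons x U) (Fin.cons true V) =
      if x then (AAset U V).image (· + 1)
      else insert 1 ((AAset U V).image (· + 1)) := by
  have hv : desL (Fin.cons true V) = 1 :: (desL V).map (· + 1) := by
    rw [desL_cons, if_pos rfl, List.singleton_append]
  have hlen : (desL (Fin.cons true V)).length = (desL V).length + 1 := by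
    rw [hv]; simp
  have hu : desL (Fin.cons x U) = (if x then [1] else []) ++ (desL U).map (· + 1) :=
    desL_cons x U
  have hmemu : ∀ d : ℕ, 1 ≤ d → (d + 1 ∈ desL (Fin.cons x U) ↔ d ∈ desL U) := by
    intro d hd
    rw [hu]
    cases x
    · rw [if_neg (by simp), List.nil_append]
      simp only [List.mem_map]
      constructor
      · rintro ⟨e, he, he2⟩
        have : e = d := by omega
        exact this ▸ he
      · intro h; exact ⟨d, h, rfl⟩
    · rw [if_pos rfl, List.singleton_append]
      simp only [List.mem_cons, List.mem_map]
      constructor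
      · rintro (h | ⟨e, he, he2⟩)
        · omega
        · have : e = d := by omega
          exact this ▸ he
      · intro h; exact Or.inr ⟨d, h, rfl⟩
  have honeu : (1 ∈ desL (Fin.cons x U)) ↔ x = true := by
    rw [hu]
    cases x
    · rw [if_neg (by simp), List.nil_append]
      simp only [List.mem_map]
      constructor
      · rintro ⟨e, he, he2⟩
        have := mem_desL_le he; omega
      · intro h; exact absurd h (by simp)
    · simp
  ext k
  rw [AAset_eq, Finset.mem_filter, Finset.mem_Icc, hlen]
  have hAAmem : ∀ j, j ∈ AAset U V ↔ (1 ≤ j ∧ j ≤ (desL V).length) ∧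
      (desL V).getD (j-1) 0 ∉ desL U := by
    intro j; rw [AAset_eq, Finset.mem_filter, Finset.mem_Icc]
  have himg : ∀ k, k ∈ (AAset U V).image (· + 1) ↔ k - 1 ∈ AAset U V ∧ 2 ≤ k := by
    intro k'
    simp only [Finset.mem_image]
    constructor
    · rintro ⟨j, hj, rfl⟩
      have := Finset.mem_Icc.1 (AAset_subset U V hj)
      exact ⟨by simpa using hj, by omega⟩
    · rintro ⟨hj, h2⟩
      exact ⟨k' - 1, hj, by omega⟩
  by_cases hk1 : k = 1
  · subst hk1
    have hget : (desL (Fin.cons true V)).getD 0 0 = 1 := by rw [hv]; rfl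
    simp only [hget, honeu]
    cases x
    · simp only [if_neg (by simp : ¬ (false = true))]
      rw [Finset.mem_insert]
      simp [Nat.le_add_left]
    · rw [if_pos rfl, himg]
      simp
  · by_cases hk2 : 2 ≤ k ∧ k ≤ (desL V).length + 1
    · have hklt : k - 2 < (desL V).length := by omega
      have hget : (desL (Fin.cons true V)).getD (k-1) 0 = (desL V).getD (k-2) 0 + 1 := by
        rw [hv]
        have : k - 1 = (k - 2) + 1 := by omega
        rw [this, List.getD_cons_succ]
        rw [List.getD_eq_getElem _ 0 (by simpa using hklt), List.getD_eq_getElem _ 0 hklt,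
          List.getElem_map]
      have hmem : (desL V).getD (k-2) 0 ∈ desL V := getD_mem hklt
      have hle := mem_desL_le hmem
      rw [hget]
      have key : ((1 ≤ k ∧ k ≤ (desL V).length + 1) ∧
          (desL V).getD (k-2) 0 + 1 ∉ desL (Fin.cons x U)) ↔ k - 1 ∈ AAset U V ∧ 2 ≤ k := by
        rw [hmemu _ (by omega), hAAmem]
        have h12 : k - 1 - 1 = k - 2 := by omega
        rw [h12]
        constructor
        · rintro ⟨_, h⟩; exact ⟨⟨⟨by omega, by omega⟩, h⟩, by omega⟩
        · rintro ⟨⟨_, h⟩, _⟩; exact ⟨⟨by omega, by omega⟩, h⟩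
      rw [key]
      cases x
      · simp only [if_neg (by simp : ¬ (false = true))]
        rw [Finset.mem_insert, himg]
        constructor
        · exact fun h => Or.inr h
        · rintro (h | h)
          · exact absurd h hk1
          · exact h
      · rw [if_pos rfl, himg]
    · -- out of range
      have h1 : ¬ (1 ≤ k ∧ k ≤ (desL V).length + 1) := by omega
      have h2 : k ∉ (AAset U V).image (· + 1) := by
        rw [himg]
        rintro ⟨hj, h2⟩
        have := Finset.mem_Icc.1 (AAset_subset U V hj)
        omega
      cases x
      · simp only [if_neg (by simp : ¬ (false = true))]
        rw [Finset.mem_insert]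
        simp only [h1, false_and, false_iff, not_or]
        exact ⟨hk1, h2⟩
      · rw [if_pos rfl]
        simp only [h1, false_and, false_iff]
        exact h2

/-- shift of the q-alphabet -/
def qsh {R : Type*} (q : ℕ → R) : ℕ → R := fun i => q (i + 1)

lemma wtL_mir {m : ℕ} (v : Fin m → Bool) : (desL (mirW v)).length = (desL v).length := by
  unfold desL
  rw [List.length_map, List.length_map]
  have h : ∀ w : Fin m → Bool, ((List.finRange m).filter (fun j => w j)).length =
      (Finset.univ.filter (fun j => w j = true)).card := by
    intro w
    rw [← List.toFinset_card_of_nodup ((List.nodup_finRange m).filter _)]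
    congr 1
    ext j
    simp [List.mem_filter]
  rw [h, h]
  apply Finset.card_bij (fun j _ => j.rev)
  · intro j hj
    simp only [Finset.mem_filter, Finset.mem_univ, true_and] at hj ⊢
    exact hj
  · intro j _ j' _ hjj
    exact Fin.rev_injective hjj
  · intro j hj
    refine ⟨j.rev, ?_, by simp⟩
    simp only [Finset.mem_filter, Finset.mem_univ, true_and, mirW] at hj ⊢
    exact Finset.mem_filter.2 ⟨Finset.mem_univ _, by simpa [mirW] using hj⟩

lemma one_le_of_mem_AAset {m : ℕ} {u v : Fin m → Bool} {k : ℕ} (h : k ∈ AAset u v) : 1 ≤ k :=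
  (Finset.mem_Icc.1 (AAset_subset u v h)).1

lemma matA_ff {R : Type*} [CommRing R] (q t : ℕ → R) {m : ℕ} (u v : Fin m → Bool) :
    matA q t (Fin.cons false u) (Fin.cons false v) = matA (qsh q) t u v := by
  unfold matA
  rw [mirW_cons, mirW_cons, cmplW_cons, cmplW_cons, AAset_snoc_false]
  simp only [Bool.not_false, Bool.not_true]
  rw [AAset_cons_true, if_pos rfl, Finset.prod_image]
  · simp only [qsh]
  · intro a _ b _ h; simp only at h; omega

lemma matA_tf {R : Type*} [CommRing R] (q t : ℕ → R) {m : ℕ} (u v : Fin m → Bool) :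
    matA q t (Fin.cons true u) (Fin.cons false v) = q 1 * matA (qsh q) t u v := by
  unfold matA
  rw [mirW_cons, mirW_cons, cmplW_cons, cmplW_cons, AAset_snoc_false]
  simp only [Bool.not_false, Bool.not_true]
  rw [AAset_cons_true, if_neg (by simp), Finset.prod_insert, Finset.prod_image]
  · simp only [qsh]
    ring
  · intro a _ b _ h; simp only at h; omega
  · simp only [Finset.mem_image, not_exists]
    intro a ha
    have := one_le_of_mem_AAset ha.1
    omega

lemma matA_tt {R : Type*} [CommRing R] (q t : ℕ → R) {m : ℕ} (u v : Fin m → Bool) :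
    matA q t (Fin.cons true u) (Fin.cons true v) = matA q t u v := by
  unfold matA
  rw [mirW_cons, mirW_cons, cmplW_cons, cmplW_cons, AAset_snoc_true, if_pos rfl]
  simp only [Bool.not_true]
  rw [AAset_cons_false]

lemma matA_ft {R : Type*} [CommRing R] (q t : ℕ → R) {m : ℕ} (u v : Fin m → Bool) :
    matA q t (Fin.cons false u) (Fin.cons true v) =
      matA q t u v * t ((desL v).length + 1) := by
  unfold matA
  rw [mirW_cons, mirW_cons, cmplW_cons, cmplW_cons, AAset_snoc_true,
    if_neg (by simp)]
  simp only [Bool.not_false, Bool.not_true]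
  rw [AAset_cons_false, Finset.prod_insert, wtL_mir]
  · ring
  · intro h
    have := Finset.mem_Icc.1 (AAset_subset _ _ h)
    rw [wtL_mir] at this
    omega

/-- The matrix A_n. -/
def MA {R : Type*} [CommRing R] (q t : ℕ → R) (m : ℕ) :
    Matrix (Fin m → Bool) (Fin m → Bool) R :=
  Matrix.of (fun u v => matA q t u v)

/-- split equiv -/
def splitE (m : ℕ) : (Fin m → Bool) ⊕ (Fin m → Bool) ≃ (Fin (m+1) → Bool) where
  toFun := Sum.elim (fun v => Fin.cons false v) (fun v => Fin.cons true v)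
  invFun f := if f 0 then Sum.inr (Fin.tail f) else Sum.inl (Fin.tail f)
  left_inv x := by
    cases x with
    | inl v => simp [Fin.cons_zero, Fin.tail_cons]
    | inr v => simp [Fin.cons_zero, Fin.tail_cons]
  right_inv f := by
    by_cases h : f 0
    · simp only [h, if_pos]
      simp only [Sum.elim_inr]
      rw [show (true : Bool) = f 0 from h.symm, Fin.cons_self_tail]
    · simp only [Bool.not_eq_true] at h
      simp only [h, Bool.false_eq_true, if_false, Sum.elim_inl]
      rw [show (false : Bool) = f 0 from h.symm, Fin.cons_self_tail]

lemma det_MA_succ {R : Type*} [CommRing R] (q t : ℕ → R) (m : ℕ) :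
    (MA q t (m+1)).det = (MA (qsh q) t m).det * (MA q t m).det *
      ∏ v : Fin m → Bool, (1 - q 1 * t ((desL v).length + 1)) := by
  classical
  set d : (Fin m → Bool) → R := fun v => 1 - q 1 * t ((desL v).length + 1) with hd
  set A : Matrix (Fin m → Bool) (Fin m → Bool) R := MA q t m with hA
  set B : Matrix (Fin m → Bool) (Fin m → Bool) R := MA (qsh q) t m with hB
  set X : Matrix (Fin m → Bool) (Fin m → Bool) R :=
    A * Matrix.diagonal (fun v => t ((desL v).length + 1)) with hX
  have hsub : (MA q t (m+1)).submatrix (splitE m) (splitE m) =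
      Matrix.fromBlocks B X (q 1 • B) A := by
    ext i j
    cases i with
    | inl i =>
      cases j with
      | inl j =>
        simp only [Matrix.submatrix_apply, splitE, Equiv.coe_fn_mk, Sum.elim_inl,
          Matrix.fromBlocks_apply₁₁, MA, Matrix.of_apply, hB]
        exact matA_ff q t i j
      | inr j =>
        simp only [Matrix.submatrix_apply, splitE, Equiv.coe_fn_mk, Sum.elim_inl,
          Sum.elim_inr, Matrix.fromBlocks_apply₁₂, MA, Matrix.of_apply, hX,
          Matrix.mul_diagonal, hA]
        exact matA_ft q t i j
    | inr i =>
      cases j with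
      | inl j =>
        simp only [Matrix.submatrix_apply, splitE, Equiv.coe_fn_mk, Sum.elim_inl,
          Sum.elim_inr, Matrix.fromBlocks_apply₂₁, MA, Matrix.of_apply, hB,
          Matrix.smul_apply, smul_eq_mul]
        exact matA_tf q t i j
      | inr j =>
        simp only [Matrix.submatrix_apply, splitE, Equiv.coe_fn_mk, Sum.elim_inr,
          Matrix.fromBlocks_apply₂₂, MA, Matrix.of_apply, hA]
        exact matA_tt q t i j
  have hfac : Matrix.fromBlocks B X (q 1 • B) A =
      Matrix.fromBlocks (1 : Matrix _ _ R) 0 (q 1 • (1 : Matrix _ _ R)) 1 *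
        Matrix.fromBlocks B X 0 (A - q 1 • X) := by
    rw [Matrix.fromBlocks_multiply]
    simp [Matrix.smul_mul, add_sub_cancel]
  have hdet : (MA q t (m+1)).det = B.det * (A - q 1 • X).det := by
    rw [← Matrix.det_submatrix_equiv_self (splitE m), hsub, hfac, Matrix.det_mul,
      Matrix.det_fromBlocks_zero₁₂, Matrix.det_fromBlocks_zero₂₁]
    simp
  have hAX : A - q 1 • X = A * Matrix.diagonal d := by
    rw [hX, hd]
    have h : Matrix.diagonal (fun v : Fin m → Bool => 1 - q 1 * t ((desL v).length + 1)) =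
        1 - q 1 • Matrix.diagonal (fun v : Fin m → Bool => t ((desL v).length + 1)) := by
      ext i j
      by_cases hij : i = j
      · subst hij; simp [Matrix.diagonal, Matrix.one_apply]
      · simp [Matrix.diagonal_apply_ne _ hij, Matrix.one_apply_ne hij]
    rw [h, Matrix.mul_sub, Matrix.mul_one, mul_smul_comm]
  rw [hdet, hAX, Matrix.det_mul, Matrix.det_diagonal, hd]
  ring

lemma pascal_merge {R : Type*} [CommRing R] (g : ℕ → R) (m : ℕ) :
    ∏ j ∈ Finset.range (m+2), g j ^ ((m+1).choose j) =
      (∏ j ∈ Finset.range (m+1), g j ^ (m.choose j)) *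
        ∏ j ∈ Finset.range (m+1), g (j+1) ^ (m.choose j) := by
  have hstar : (∏ j ∈ Finset.range (m+1), g (j+1) ^ (m.choose (j+1))) * g 0 =
      ∏ j ∈ Finset.range (m+1), g j ^ (m.choose j) := by
    have h1 := Finset.prod_range_succ' (fun j => g j ^ (m.choose j)) (m+1)
    have h2 : ∏ j ∈ Finset.range (m+2), g j ^ (m.choose j) =
        ∏ j ∈ Finset.range (m+1), g j ^ (m.choose j) := by
      rw [Finset.prod_range_succ, Nat.choose_succ_self, pow_zero, mul_one]
    rw [h2] at h1
    rw [Nat.choose_zero_right, pow_one] at h1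
    exact h1.symm
  rw [Finset.prod_range_succ' (fun j => g j ^ ((m+1).choose j)) (m+1)]
  simp only [Nat.choose_succ_succ, pow_add, Finset.prod_mul_distrib,
    Nat.choose_zero_right, pow_one]
  rw [← hstar]
  ring

/-- ∏_{i=1}^{j} (1 - q_i t_{j+1-i}) -/
def Dfac {R : Type*} [CommRing R] (q t : ℕ → R) (j : ℕ) : R :=
  ∏ i ∈ Finset.Icc 1 j, (1 - q i * t (j + 1 - i))

lemma Dfac_zero {R : Type*} [CommRing R] (q t : ℕ → R) : Dfac q t 0 = 1 := by
  simp [Dfac]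

lemma Dfac_succ {R : Type*} [CommRing R] (q t : ℕ → R) (j : ℕ) :
    Dfac q t (j+1) = (1 - q 1 * t (j+1)) * Dfac (qsh q) t j := by
  unfold Dfac
  have h : Finset.Icc 1 (j+1) = insert 1 (Finset.Icc 2 (j+1)) := by
    ext i; simp only [Finset.mem_Icc, Finset.mem_insert]; omega
  rw [h, Finset.prod_insert (by simp [Finset.mem_Icc])]
  have h2 : Finset.Icc 2 (j+1) = (Finset.Icc 1 j).image (· + 1) := by
    ext i
    simp only [Finset.mem_Icc, Finset.mem_image]
    constructor
    · intro hi; exact ⟨i - 1, by omega, by omega⟩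
    · rintro ⟨a, ha, rfl⟩; omega
  have hprod : ∏ x ∈ Finset.Icc 2 (j+1), (1 - q x * t (j+1+1-x)) =
      ∏ i ∈ Finset.Icc 1 j, (1 - qsh q i * t (j+1-i)) := by
    rw [h2, Finset.prod_image (by intro a _ b _ hab; simp only at hab; omega)]
    apply Finset.prod_congr rfl
    intro i hi
    rw [Finset.mem_Icc] at hi
    simp only [qsh]
    have harg : j+1+1-(i+1) = j+1-i := by omega
    rw [harg]
  rw [hprod]
  norm_num

/-- RHS in range form -/
def RHSr {R : Type*} [CommRing R] (q t : ℕ → R) (m : ℕ) : R :=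
  ∏ j ∈ Finset.range (m+1), (Dfac q t j) ^ (m.choose j)

lemma RHSr_succ {R : Type*} [CommRing R] (q t : ℕ → R) (m : ℕ) :
    RHSr q t (m+1) = RHSr (qsh q) t m * RHSr q t m *
      ∏ j ∈ Finset.range (m+1), (1 - q 1 * t (j+1)) ^ (m.choose j) := by
  unfold RHSr
  rw [pascal_merge]
  have h : ∏ j ∈ Finset.range (m+1), (Dfac q t (j+1)) ^ (m.choose j) =
      (∏ j ∈ Finset.range (m+1), (1 - q 1 * t (j+1)) ^ (m.choose j)) *
        ∏ j ∈ Finset.range (m+1), (Dfac (qsh q) t j) ^ (m.choose j) := by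
    rw [← Finset.prod_mul_distrib]
    apply Finset.prod_congr rfl
    intro j _
    rw [Dfac_succ, mul_pow]
  rw [h]
  ring

lemma wtL_cons {m : ℕ} (a : Bool) (v : Fin m → Bool) :
    (desL (Fin.cons a v)).length = (if a then 1 else 0) + (desL v).length := by
  rw [desL_cons, List.length_append, List.length_map]
  cases a <;> simp

lemma prod_wt {R : Type*} [CommRing R] (m : ℕ) (f : ℕ → R) :
    ∏ v : Fin m → Bool, f ((desL v).length) =
      ∏ j ∈ Finset.range (m+1), (f j) ^ (m.choose j) := by
  induction m generalizing f with
  | zero =>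
    rw [Finset.prod_range_succ]
    simp only [Finset.range_zero, Finset.prod_empty, Nat.choose_self, pow_one, one_mul]
    have : ∀ v : Fin 0 → Bool, (desL v).length = 0 := by
      intro v; simp [desL, List.finRange_zero]
    calc ∏ v : Fin 0 → Bool, f ((desL v).length)
        = ∏ _v : Fin 0 → Bool, f 0 := by
          apply Finset.prod_congr rfl; intro v _; rw [this]
      _ = f 0 ^ Fintype.card (Fin 0 → Bool) := Finset.prod_const _
      _ = f 0 := by simp
  | succ n ih =>
    have he : ∏ v : Fin (n+1) → Bool, f ((desL v).length) =
        ∏ p : Bool × (Fin n → Bool), f ((desL (Fin.cons p.1 p.2)).length) := by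
      apply Fintype.prod_equiv (Fin.consEquiv (fun _ => Bool)).symm
      intro v
      simp only [Fin.consEquiv_symm_apply]
      congr 1
      rw [Fin.cons_self_tail]
    rw [he, Fintype.prod_prod_type, Fintype.prod_bool]
    have h1 : ∏ v : Fin n → Bool, f ((desL (Fin.cons true v)).length) =
        ∏ j ∈ Finset.range (n+1), (f (j+1)) ^ (n.choose j) := by
      rw [← ih (fun j => f (j+1))]
      apply Finset.prod_congr rfl
      intro v _
      rw [wtL_cons]
      simp [Nat.add_comm]
    have h2 : ∏ v : Fin n → Bool, f ((desL (Fin.cons false v)).length) =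
        ∏ j ∈ Finset.range (n+1), (f j) ^ (n.choose j) := by
      rw [← ih f]
      apply Finset.prod_congr rfl
      intro v _
      rw [wtL_cons]
      simp
    rw [h1, h2, pascal_merge]
    ring

lemma desL_zero (v : Fin 0 → Bool) : desL v = [] := by
  simp [desL]

lemma AAset_zero (u v : Fin 0 → Bool) : AAset u v = ∅ := by
  rw [AAset_eq, desL_zero v, desL_zero u]
  simp

lemma det_MA {R : Type*} [CommRing R] (t : ℕ → R) :
    ∀ m (q : ℕ → R), (MA q t m).det = RHSr q t m := by
  intro m
  induction m with
  | zero =>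
    intro q
    rw [Matrix.det_unique]
    show matA q t _ _ = _
    unfold matA
    rw [AAset_zero, AAset_zero]
    simp [RHSr, Dfac_zero]
  | succ n ih =>
    intro q
    rw [det_MA_succ, ih, ih, RHSr_succ]
    congr 1
    exact prod_wt n (fun j => 1 - q 1 * t (j + 1))

lemma RHSr_eq_Icc {R : Type*} [CommRing R] (q t : ℕ → R) (m : ℕ) :
    RHSr q t m = ∏ k ∈ Finset.Icc 2 (m+1), ∏ i ∈ Finset.Icc 1 (k-1),
      (1 - q i * t (k-i)) ^ (m.choose (k-1)) := by
  rw [← Finset.Ico_add_one_right_eq_Icc, Finset.prod_Ico_eq_prod_range]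
  have hm : m + 1 + 1 - 2 = m := by omega
  rw [hm]
  unfold RHSr
  rw [Finset.prod_range_succ' (fun j => (Dfac q t j) ^ (m.choose j)) m]
  rw [Dfac_zero, one_pow, mul_one]
  apply Finset.prod_congr rfl
  intro j _
  have h1 : 2 + j - 1 = j + 1 := by omega
  rw [h1]
  unfold Dfac
  rw [← Finset.prod_pow]
  apply Finset.prod_congr rfl
  intro i hi
  rw [Finset.mem_Icc] at hi
  have h2 : 2 + j - i = j + 1 + 1 - i := by omega
  rw [h2]


/-- the determinant of `A_n` factors completely into linear
factors: `det A_n = ∏_{k=2}^{n} ∏_{i=1}^{k-1} (1 - q_i t_{k-i})^(binom(n-1,k-1))`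
(here `n = m+1`). -/
theorem stmt_1 {R : Type*} [CommRing R] (m : ℕ) (q t : ℕ → R) :
    (Matrix.of (fun u v : Fin m → Bool => matA q t u v)).det =
      ∏ k ∈ Finset.Icc 2 (m+1), ∏ i ∈ Finset.Icc 1 (k-1),
        (1 - q i * t (k-i)) ^ (Nat.choose m (k-1)) := by
  rw [← RHSr_eq_Icc q t m]
  exact det_MA t m q
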